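/- Let R be a commutative ring and A an associative unital R-algebra such that the multiplication map μ: A⊗_R A → A admits an A-bimodule right inverse. Let N be a left A-module and k ≥ 0. Suppose there exists an exact complex of left A-modules ⋯ → P₁ → P₀ → N → 0 in which every P_n is projective as an R-module, and suppose the projective dimension of N as an R-module is at most k. Then the projective dimension of N as a left A-module is at most k. -/

import Mathlib

open TensorProduct

/-- `ProjDimLE S N k`: the projective dimension of the `S`-module `N` is at most `k`, i.e.
`N` admits a projective resolution `0 → Q_k → ⋯ → Q_0 → N → 0` of length `k`
(encoded as an exact complex `⋯ → Q_1 → Q_0 → N → 0` with all `Q_n` projective and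
`Q_n = 0` for `n > k`). -/
def ProjDimLE (S : Type) [Ring S] (N : Type) [AddCommGroup N] [Module S N] (k : ℕ) : Prop :=
  ∃ (Q : ℕ → ModuleCat.{0} S) (d : ∀ n : ℕ, (Q (n + 1) : Type) →ₗ[S] (Q n : Type))
    (π : (Q 0 : Type) →ₗ[S] N),
    (∀ n, Module.Projective S (Q n)) ∧
    (∀ n, k < n → ∀ x : Q n, x = 0) ∧
    Function.Surjective π ∧
    (∀ x : Q 0, π x = 0 ↔ ∃ y, d 0 y = x) ∧
    (∀ (n : ℕ) (x : Q (n + 1)), d n x = 0 ↔ ∃ y, d (n + 1) y = x)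

section Aux1

def PdRec (S : Type) [Ring S] : ℕ → ∀ (N : Type) [AddCommGroup N] [Module S N], Prop
  | 0 => fun N _ _ => Module.Projective S N
  | (k+1) => fun N _ _ => ∃ (Q : ModuleCat.{0} S) (f : (Q : Type) →ₗ[S] N),
      Module.Projective S Q ∧ Function.Surjective f ∧ PdRec S k (LinearMap.ker f)

variable {S : Type} [Ring S]

theorem pdRec_of_equiv : ∀ (k : ℕ) (M M' : Type) [AddCommGroup M] [Module S M]
    [AddCommGroup M'] [Module S M'], (M ≃ₗ[S] M') → PdRec S k M → PdRec S k M'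
  | 0, M, M', _, _, _, _, e, h => by
      simp only [PdRec] at h ⊢; exact (haveI := h; Module.Projective.of_equiv e)
  | (k+1), M, M', _, _, _, _, e, h => by
      simp only [PdRec] at h ⊢
      obtain ⟨Q, f, hQ, hf, hk⟩ := h
      refine ⟨Q, e.toLinearMap.comp f, hQ, e.surjective.comp hf, ?_⟩
      have : LinearMap.ker (e.toLinearMap.comp f) = LinearMap.ker f := by
        ext x; simp [LinearMap.mem_ker]
      exact pdRec_of_equiv k _ _ (LinearEquiv.ofEq _ _ this.symm) hk

/-- If `f : M → Q` is a surjection onto a projective module, `M ≃ ker f × Q`. -/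
theorem equiv_ker_prod {M Q : Type} [AddCommGroup M] [Module S M] [AddCommGroup Q] [Module S Q]
    (f : M →ₗ[S] Q) (hf : Function.Surjective f) (hQ : Module.Projective S Q) :
    Nonempty (M ≃ₗ[S] (LinearMap.ker f × Q)) := by
  obtain ⟨h, hh⟩ := f.exists_rightInverse_of_surjective (LinearMap.range_eq_top.2 hf)
  have hfh : ∀ q, f (h q) = q := fun q => congrArg (· q) (congrArg DFunLike.coe hh)
  refine ⟨LinearEquiv.ofLinear
    (LinearMap.prod ((LinearMap.id - h.comp f).codRestrict _ (fun m => by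
        simp [LinearMap.mem_ker, hfh])) f)
    ((LinearMap.ker f).subtype.comp (LinearMap.fst S _ Q) + h.comp (LinearMap.snd S _ Q))
    ?_ ?_⟩
  · apply LinearMap.ext; rintro ⟨⟨x, hx⟩, q⟩
    have hx' : f x = 0 := hx
    refine Prod.ext (Subtype.ext ?_) ?_
    · simp [hx', hfh]
    · simp [hx', hfh]
  · apply LinearMap.ext; intro x; simp

theorem proj_prod {M Q : Type} [AddCommGroup M] [Module S M] [AddCommGroup Q] [Module S Q]
    (hM : Module.Projective S M) (hQ : Module.Projective S Q) :
    Module.Projective S (M × Q) := by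
  have := hM; have := hQ; infer_instance

theorem ker_prodMap_equiv {M Q : Type} [AddCommGroup M] [Module S M] [AddCommGroup Q]
    [Module S Q] (f : M →ₗ[S] Q) {P : Type} [AddCommGroup P] [Module S P] :
    Nonempty ((LinearMap.ker (f.prodMap (LinearMap.id (M := P)))) ≃ₗ[S] LinearMap.ker f) := by
  refine ⟨LinearEquiv.ofLinear
    (((LinearMap.fst S M P).comp (LinearMap.ker _).subtype).codRestrict _ (fun x => ?_))
    (((LinearMap.inl S M P).comp (LinearMap.ker f).subtype).codRestrict _ (fun x => ?_)) ?_ ?_⟩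
  · have h := LinearMap.mem_ker.1 x.2
    have : f x.1.1 = 0 := congrArg Prod.fst h
    simpa [LinearMap.mem_ker] using this
  · have h : f x.1 = 0 := x.2
    simp [LinearMap.mem_ker, h]
  · apply LinearMap.ext; rintro ⟨x, hx⟩; rfl
  · apply LinearMap.ext; rintro ⟨⟨x, q⟩, hx⟩
    have h : q = 0 := congrArg Prod.snd (LinearMap.mem_ker.1 hx)
    apply Subtype.ext
    subst h; rfl

theorem pdRec_prod : ∀ (k : ℕ) (M Q : Type) [AddCommGroup M] [Module S M]
    [AddCommGroup Q] [Module S Q], Module.Projective S Q → PdRec S k M → PdRec S k (M × Q)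
  | 0, M, Q, _, _, _, _, hQ, h => by
      simp only [PdRec] at h ⊢
      exact proj_prod h hQ
  | (k+1), M, Q, _, _, _, _, hQ, h => by
      simp only [PdRec] at h ⊢
      obtain ⟨P, f, hP, hf, hk⟩ := h
      refine ⟨ModuleCat.of S (↥P × Q), f.prodMap LinearMap.id, proj_prod hP hQ,
        Function.Surjective.prodMap hf Function.surjective_id, ?_⟩
      obtain ⟨e⟩ := ker_prodMap_equiv (S := S) f (P := Q)
      exact pdRec_of_equiv k _ _ e.symm hk

theorem schanuel {M P Q : Type} [AddCommGroup M] [Module S M] [AddCommGroup P] [Module S P]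
    [AddCommGroup Q] [Module S Q] (f : P →ₗ[S] M) (g : Q →ₗ[S] M)
    (hf : Function.Surjective f) (hg : Function.Surjective g)
    (hP : Module.Projective S P) (hQ : Module.Projective S Q) :
    Nonempty ((LinearMap.ker f × Q) ≃ₗ[S] (LinearMap.ker g × P)) := by
  set h : (P × Q) →ₗ[S] M := f.comp (LinearMap.fst S P Q) - g.comp (LinearMap.snd S P Q) with hh
  set X := LinearMap.ker h with hX
  set πP : X →ₗ[S] P := (LinearMap.fst S P Q).comp X.subtype with hπP
  set πQ : X →ₗ[S] Q := (LinearMap.snd S P Q).comp X.subtype with hπQ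
  have hπPs : Function.Surjective πP := by
    intro p
    obtain ⟨q, hq⟩ := hg (f p)
    exact ⟨⟨(p, q), by simp [hX, hh, LinearMap.mem_ker, hq]⟩, rfl⟩
  have hπQs : Function.Surjective πQ := by
    intro q
    obtain ⟨p, hp⟩ := hf (g q)
    exact ⟨⟨(p, q), by simp [hX, hh, LinearMap.mem_ker, hp]⟩, rfl⟩
  have ekP : Nonempty (LinearMap.ker πP ≃ₗ[S] LinearMap.ker g) := by
    refine ⟨LinearEquiv.ofLinear
      (((LinearMap.snd S P Q).comp (X.subtype.comp (LinearMap.ker πP).subtype)).codRestrict _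
        (fun x => ?_))
      ((((LinearMap.inr S P Q).comp (LinearMap.ker g).subtype).codRestrict X (fun x => ?_)).codRestrict
        _ (fun x => ?_)) ?_ ?_⟩
    · have h1 : x.1.1.1 = 0 := x.2
      have h2 : f x.1.1.1 - g x.1.1.2 = 0 := x.1.2
      rw [h1] at h2; simp at h2
      simpa [LinearMap.mem_ker] using h2
    · have : g x.1 = 0 := x.2
      simp [hX, hh, LinearMap.mem_ker, this]
    · rfl
    · apply LinearMap.ext; rintro ⟨x, hx⟩; rfl
    · apply LinearMap.ext; rintro ⟨⟨⟨p, q⟩, hpq⟩, hker⟩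
      have hp : p = 0 := hker
      apply Subtype.ext; apply Subtype.ext
      subst hp; rfl
  have ekQ : Nonempty (LinearMap.ker πQ ≃ₗ[S] LinearMap.ker f) := by
    refine ⟨LinearEquiv.ofLinear
      (((LinearMap.fst S P Q).comp (X.subtype.comp (LinearMap.ker πQ).subtype)).codRestrict _
        (fun x => ?_))
      ((((LinearMap.inl S P Q).comp (LinearMap.ker f).subtype).codRestrict X (fun x => ?_)).codRestrict
        _ (fun x => ?_)) ?_ ?_⟩
    · have h1 : x.1.1.2 = 0 := x.2
      have h2 : f x.1.1.1 - g x.1.1.2 = 0 := x.1.2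
      rw [h1] at h2; simp at h2
      simpa [LinearMap.mem_ker] using h2
    · have : f x.1 = 0 := x.2
      simp [hX, hh, LinearMap.mem_ker, this]
    · rfl
    · apply LinearMap.ext; rintro ⟨x, hx⟩; rfl
    · apply LinearMap.ext; rintro ⟨⟨⟨p, q⟩, hpq⟩, hker⟩
      have hq : q = 0 := hker
      apply Subtype.ext; apply Subtype.ext
      subst hq; rfl
  obtain ⟨eP⟩ := equiv_ker_prod πP hπPs hP
  obtain ⟨eQ⟩ := equiv_ker_prod πQ hπQs hQ
  obtain ⟨e1⟩ := ekP; obtain ⟨e2⟩ := ekQ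
  exact ⟨(e2.prodCongr (LinearEquiv.refl S Q)).symm.trans (eQ.symm.trans (eP.trans
    (e1.prodCongr (LinearEquiv.refl S P))))⟩

theorem pdRec_of_prod : ∀ (k : ℕ) (M Q : Type) [AddCommGroup M] [Module S M]
    [AddCommGroup Q] [Module S Q], Module.Projective S Q → PdRec S k (M × Q) → PdRec S k M
  | 0, M, Q, _, _, _, _, hQ, h => by
      simp only [PdRec] at h ⊢
      have := h
      exact Module.Projective.of_split (LinearMap.inl S M Q) (LinearMap.fst S M Q)
        (by apply LinearMap.ext; intro x; rfl)
  | (k+1), M, Q, _, _, _, _, hQ, h => by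
      simp only [PdRec] at h ⊢
      obtain ⟨F, f, hF, hf, hk⟩ := h
      set f1 : (F : Type) →ₗ[S] M := (LinearMap.fst S M Q).comp f with hf1
      have hf1s : Function.Surjective f1 := by
        intro m; obtain ⟨y, hy⟩ := hf (m, 0); exact ⟨y, by simp [hf1, hy]⟩
      refine ⟨F, f1, hF, hf1s, ?_⟩
      -- f2 : ker f1 → Q
      set f2 : (LinearMap.ker f1 : Type) →ₗ[S] Q :=
        ((LinearMap.snd S M Q).comp f).comp (LinearMap.ker f1).subtype with hf2
      have hf2s : Function.Surjective f2 := by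
        intro q
        obtain ⟨y, hy⟩ := hf (0, q)
        refine ⟨⟨y, by simp [hf1, LinearMap.mem_ker, hy]⟩, by simp [hf2, hy]⟩
      obtain ⟨e⟩ := equiv_ker_prod f2 hf2s hQ
      refine pdRec_of_equiv k _ _ e.symm ?_
      have ekk : Nonempty (LinearMap.ker f ≃ₗ[S] LinearMap.ker f2) := by
        refine ⟨LinearEquiv.ofLinear
          (((LinearMap.ker f).subtype.codRestrict (LinearMap.ker f1) (fun x => by
              have : f x.1 = 0 := x.2
              simp [hf1, LinearMap.mem_ker, this])).codRestrict _ (fun x => ?_))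
          (((LinearMap.ker f1).subtype.comp (LinearMap.ker f2).subtype).codRestrict _
            (fun x => ?_)) ?_ ?_⟩
        · have : f x.1 = 0 := x.2
          simp [hf2, LinearMap.mem_ker, this]
          exact congrArg Prod.snd this
        · have h1 : f1 x.1.1 = 0 := x.1.2
          have h2 : f2 x.1 = 0 := x.2
          have hfst : (f x.1.1).1 = 0 := h1
          have hsnd : (f x.1.1).2 = 0 := h2
          have : f x.1.1 = 0 := by
            rw [Prod.ext_iff]
            exact ⟨hfst, hsnd⟩
          simpa [LinearMap.mem_ker] using this
        · apply LinearMap.ext; rintro ⟨⟨x, h1⟩, h2⟩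
          apply Subtype.ext; apply Subtype.ext; rfl
        · apply LinearMap.ext; rintro ⟨x, hx⟩; rfl
      obtain ⟨ek⟩ := ekk
      exact pdRec_prod k _ _ hQ (pdRec_of_equiv k _ _ ek hk)

theorem pdRec_shift {M P : Type} [AddCommGroup M] [Module S M] [AddCommGroup P] [Module S P]
    (k : ℕ) (f : P →ₗ[S] M) (hf : Function.Surjective f) (hP : Module.Projective S P)
    (h : PdRec S (k+1) M) : PdRec S k (LinearMap.ker f) := by
  simp only [PdRec] at h
  obtain ⟨Q, g, hQ, hg, hk⟩ := h
  obtain ⟨e⟩ := schanuel f g hf hg hP hQ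
  exact pdRec_of_prod k _ _ hQ (pdRec_of_equiv k _ _ e.symm (pdRec_prod k _ _ hP hk))

end Aux1

section Aux2

variable {R : Type} [CommRing R] {A : Type} [Ring A] [Algebra R A]

/-- scalar action as an `R`-linear map `A →ₗ[R] M`. -/
def actL (M : Type) [AddCommGroup M] [Module R M] [Module A M] [IsScalarTower R A M]
    (m : M) : A →ₗ[R] M where
  toFun a := a • m
  map_add' a b := add_smul a b m
  map_smul' r a := by simp [smul_assoc]

theorem sep_projective
    (σ : A →ₗ[R] A ⊗[R] A)
    (hσ_splits : ∀ x : A, LinearMap.mul' R A (σ x) = x)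
    (hσ_left : ∀ a x : A, σ (a * x) = LinearMap.rTensor A (LinearMap.mulLeft R a) (σ x))
    (hσ_right : ∀ a x : A, σ (x * a) = LinearMap.lTensor A (LinearMap.mulRight R a) (σ x))
    (M : Type) [AddCommGroup M] [Module R M] [Module A M] [IsScalarTower R A M]
    (hM : Module.Projective R M) : Module.Projective A M := by
  classical
  -- the action map `A ⊗[R] M → M`, first as an `R`-linear map
  set bilin : M →ₗ[R] A →ₗ[R] M :=
    { toFun := actL (R := R) (A := A) M
      map_add' := fun m m' => by apply LinearMap.ext; intro a; simp [actL, smul_add]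
      map_smul' := fun r m => by
        apply LinearMap.ext; intro a
        simp only [actL, LinearMap.coe_mk, AddHom.coe_mk, RingHom.id_apply,
          LinearMap.smul_apply]
        exact (smul_comm r a m).symm } with hbilin
  set τ0 : A ⊗[R] M →ₗ[R] M := TensorProduct.lift bilin.flip with hτ0
  have hτ0_tmul : ∀ (a : A) (m : M), τ0 (a ⊗ₜ[R] m) = a • m := by
    intro a m; simp [hτ0, hbilin, actL]
  have hτ0_smul : ∀ (a : A) (z : A ⊗[R] M), τ0 (a • z) = a • τ0 z := by
    intro a z
    induction z using TensorProduct.induction_on with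
    | zero => simp
    | tmul x m => rw [smul_tmul', smul_eq_mul, hτ0_tmul, hτ0_tmul, mul_smul]
    | add u v hu hv => simp only [smul_add, map_add, hu, hv]
  set τ : A ⊗[R] M →ₗ[A] M :=
    { toFun := τ0
      map_add' := map_add τ0
      map_smul' := hτ0_smul } with hτ
  -- the splitting `M →ₗ[A] A ⊗[R] M`
  have s_add : ∀ m m' : M,
      LinearMap.lTensor A (actL (R := R) (A := A) M (m + m')) (σ 1)
        = LinearMap.lTensor A (actL (R := R) (A := A) M m) (σ 1)
          + LinearMap.lTensor A (actL (R := R) (A := A) M m') (σ 1) := by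
    intro m m'
    have : actL (R := R) (A := A) M (m + m') = actL (R := R) (A := A) M m + actL (R := R) (A := A) M m' := by
      apply LinearMap.ext; intro a; simp [actL, smul_add]
    rw [this, LinearMap.lTensor_add, LinearMap.add_apply]
  have s_smul : ∀ (a : A) (m : M),
      LinearMap.lTensor A (actL (R := R) (A := A) M (a • m)) (σ 1)
        = a • LinearMap.lTensor A (actL (R := R) (A := A) M m) (σ 1) := by
    intro a m
    have h1 : actL (R := R) (A := A) M (a • m)
        = (actL (R := R) (A := A) M m).comp (LinearMap.mulRight R a) := by
      apply LinearMap.ext; intro x; simp [actL, mul_smul]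
    have h2 : σ (1 * a) = σ (a * 1) := by rw [one_mul, mul_one]
    calc LinearMap.lTensor A (actL (R := R) (A := A) M (a • m)) (σ 1)
        = LinearMap.lTensor A (actL (R := R) (A := A) M m)
            (LinearMap.lTensor A (LinearMap.mulRight R a) (σ 1)) := by
          rw [h1, LinearMap.lTensor_comp, LinearMap.comp_apply]
      _ = LinearMap.lTensor A (actL (R := R) (A := A) M m)
            (LinearMap.rTensor A (LinearMap.mulLeft R a) (σ 1)) := by
          rw [← hσ_right a 1, h2, hσ_left a 1]
      _ = a • LinearMap.lTensor A (actL (R := R) (A := A) M m) (σ 1) := by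
          induction σ 1 using TensorProduct.induction_on with
          | zero => simp
          | tmul x y => simp [smul_tmul', smul_eq_mul, actL]
          | add u v hu hv => simp only [map_add, smul_add, hu, hv]
  set s : M →ₗ[A] A ⊗[R] M :=
    { toFun := fun m => LinearMap.lTensor A (actL (R := R) (A := A) M m) (σ 1)
      map_add' := s_add
      map_smul' := by intro a m; simpa using s_smul a m } with hs
  have hsplit : τ.comp s = LinearMap.id := by
    apply LinearMap.ext; intro m
    have key : ∀ z : A ⊗[R] A,
        τ0 (LinearMap.lTensor A (actL (R := R) (A := A) M m) z) = (LinearMap.mul' R A z) • m := by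
      intro z
      induction z using TensorProduct.induction_on with
      | zero => simp
      | tmul x y => simp [actL, hτ0_tmul, mul_smul]
      | add u v hu hv => simp only [map_add, add_smul, hu, hv]
    show τ0 (LinearMap.lTensor A (actL (R := R) (A := A) M m) (σ 1)) = m
    rw [key, hσ_splits, one_smul]
  have : Module.Projective R M := hM
  have hproj : Module.Projective A (A ⊗[R] M) := inferInstance
  exact Module.Projective.of_split s τ hsplit

end Aux2

section Aux3

variable {S : Type} [Ring S]

theorem chain_to_pdRec : ∀ (k : ℕ) (N : Type) [AddCommGroup N] [Module S N],
    ProjDimLE S N k → PdRec S k N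
  | 0, N, _, _, ⟨Q, d, π, hproj, htriv, hsurj, hex0, _hex⟩ => by
      simp only [PdRec]
      have hinj : Function.Injective π := by
        rw [injective_iff_map_eq_zero]
        intro x hx
        obtain ⟨y, hy⟩ := (hex0 x).1 hx
        rw [htriv 1 (by norm_num) y] at hy
        rw [← hy, map_zero]
      have := hproj 0
      exact Module.Projective.of_equiv (LinearEquiv.ofBijective π ⟨hinj, hsurj⟩)
  | (k+1), N, _, _, ⟨Q, d, π, hproj, htriv, hsurj, hex0, hex⟩ => by
      simp only [PdRec]
      refine ⟨Q 0, π, hproj 0, hsurj, ?_⟩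
      refine chain_to_pdRec k _ ⟨fun n => Q (n+1), fun n => d (n+1),
        (d 0).codRestrict _ (fun y => (hex0 (d 0 y)).2 ⟨y, rfl⟩),
        fun n => hproj (n+1), fun n hn => htriv (n+1) (by omega), ?_, ?_, fun n x => hex (n+1) x⟩
      · rintro ⟨x, hx⟩
        obtain ⟨y, hy⟩ := (hex0 x).1 hx
        exact ⟨y, Subtype.ext hy⟩
      · intro x
        refine Iff.trans (show ((d 0).codRestrict (LinearMap.ker π) _ x = 0) ↔ d 0 x = 0 from
          ⟨fun h => congrArg Subtype.val h, fun h => Subtype.ext h⟩) ?_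
        exact hex 0 x

theorem pdRec_to_chain : ∀ (k : ℕ) (N : Type) [AddCommGroup N] [Module S N],
    PdRec S k N → ProjDimLE S N k
  | 0, N, _, _, h => by
      simp only [PdRec] at h
      refine ⟨fun n => Nat.casesOn n (ModuleCat.of S N) (fun _ => ModuleCat.of S PUnit),
        fun n => 0, LinearMap.id, ?_, ?_, Function.surjective_id, ?_, ?_⟩
      · intro n
        cases n with
        | zero => exact h
        | succ m => exact inferInstanceAs (Module.Projective S PUnit)
      · intro n hn x
        cases n with
        | zero => omega
        | succ m => exact Subsingleton.elim x 0
      · intro x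
        constructor
        · intro hx; exact ⟨0, by simpa using hx.symm⟩
        · rintro ⟨y, rfl⟩; rfl
      · intro n x
        simp only [LinearMap.zero_apply, eq_self_iff_true, true_iff]
        exact ⟨0, trivial⟩
  | (k+1), N, _, _, h => by
      simp only [PdRec] at h
      obtain ⟨Q, f, hQ, hf, hk⟩ := h
      obtain ⟨Q', d', π', hproj', htriv', hsurj', hex0', hex'⟩ := pdRec_to_chain k _ hk
      refine ⟨fun n => Nat.casesOn n Q Q',
        fun n => Nat.casesOn n ((LinearMap.ker f).subtype.comp π') d', f,
        ?_, ?_, hf, ?_, ?_⟩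
      · intro n; cases n with
        | zero => exact hQ
        | succ m => exact hproj' m
      · intro n hn x
        cases n with
        | zero => omega
        | succ m => exact htriv' m (by omega) x
      · intro x
        constructor
        · intro hx
          obtain ⟨y, hy⟩ := hsurj' ⟨x, hx⟩
          exact ⟨y, by simp [hy]⟩
        · rintro ⟨y, rfl⟩
          exact (π' y).2
      · intro n x
        cases n with
        | zero =>
          constructor
          · intro hx
            have : π' x = 0 := by
              apply Subtype.ext
              simpa using hx
            exact (hex0' x).1 this
          · rintro ⟨y, rfl⟩
            have := (hex0' (d' 0 y)).2 ⟨y, rfl⟩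
            simpa using congrArg Subtype.val this
        | succ m => exact hex' m x

end Aux3

section Aux4

variable {R : Type} [CommRing R] {A : Type} [Ring A] [Algebra R A]

/-- restriction-of-scalars module structure -/
abbrev rMod (M : Type) [AddCommGroup M] [Module A M] : Module R M :=
  Module.compHom M (algebraMap R A)

theorem rMod_tower (M : Type) [AddCommGroup M] [Module A M] :
    letI := rMod (R := R) (A := A) M
    IsScalarTower R A M := by
  letI := rMod (R := R) (A := A) M
  constructor
  intro x y z
  show (x • y) • z = algebraMap R A x • (y • z)
  rw [Algebra.smul_def, mul_smul]

theorem main_ind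
    (σ : A →ₗ[R] A ⊗[R] A)
    (hσ_splits : ∀ x : A, LinearMap.mul' R A (σ x) = x)
    (hσ_left : ∀ a x : A, σ (a * x) = LinearMap.rTensor A (LinearMap.mulLeft R a) (σ x))
    (hσ_right : ∀ a x : A, σ (x * a) = LinearMap.lTensor A (LinearMap.mulRight R a) (σ x)) :
    ∀ (k : ℕ) (N : Type) [AddCommGroup N] [Module R N] [Module A N] [IsScalarTower R A N],
    (∃ (P : ℕ → ModuleCat.{0} A) (d : ∀ n : ℕ, (P (n + 1) : Type) →ₗ[A] (P n : Type))
        (π : (P 0 : Type) →ₗ[A] N),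
        (∀ n, @Module.Projective R _ (P n) _ (Module.compHom (P n) (algebraMap R A))) ∧
        Function.Surjective π ∧
        (∀ x : P 0, π x = 0 ↔ ∃ y, d 0 y = x) ∧
        (∀ (n : ℕ) (x : P (n + 1)), d n x = 0 ↔ ∃ y, d (n + 1) y = x)) →
    PdRec R k N → PdRec A k N
  | 0, N, _, _, _, _, _, hdim => by
      simp only [PdRec] at hdim ⊢
      exact sep_projective σ hσ_splits hσ_left hσ_right N hdim
  | (k+1), N, _, _, _, _, ⟨P, d, π, hPproj, hπs, hex0, hex⟩, hdim => by
      simp only [PdRec] at hdim ⊢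
      letI mR0 : Module R (P 0) := rMod (R := R) (A := A) (P 0)
      haveI t0 : IsScalarTower R A (P 0) := rMod_tower (R := R) (A := A) (P 0)
      have hP0 : Module.Projective R (P 0) := hPproj 0
      -- A-projectivity of P 0
      have hP0A : Module.Projective A (P 0) :=
        sep_projective σ hσ_splits hσ_left hσ_right (P 0) hP0
      refine ⟨P 0, π, hP0A, hπs, ?_⟩
      -- the kernel
      set K := LinearMap.ker π with hK
      letI mRK : Module R K := rMod (R := R) (A := A) K
      haveI tK : IsScalarTower R A K := rMod_tower (R := R) (A := A) (K : Type)
      -- PdRec R k K via dimension shifting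
      have hdimK : PdRec R k K := by
        set πR := π.restrictScalars R with hπR
        have h1 : PdRec R k (LinearMap.ker πR) :=
          pdRec_shift k πR hπs hP0 hdim
        refine pdRec_of_equiv k _ _ ?_ h1
        refine LinearEquiv.ofLinear
          ⟨⟨fun x => (⟨x.1, x.2⟩ : K), fun x y => rfl⟩, fun r x => rfl⟩
          ⟨⟨fun x => (⟨x.1, x.2⟩ : LinearMap.ker πR), fun x y => rfl⟩, fun r x => rfl⟩
          ?_ ?_
        · apply LinearMap.ext; rintro ⟨x, hx⟩; rfl
        · apply LinearMap.ext; rintro ⟨x, hx⟩; rfl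
      -- the shifted resolution of K
      have hresK : ∃ (P' : ℕ → ModuleCat.{0} A)
          (d' : ∀ n : ℕ, (P' (n + 1) : Type) →ₗ[A] (P' n : Type))
          (π' : (P' 0 : Type) →ₗ[A] (K : Type)),
          (∀ n, @Module.Projective R _ (P' n) _ (Module.compHom (P' n) (algebraMap R A))) ∧
          Function.Surjective π' ∧
          (∀ x : P' 0, π' x = 0 ↔ ∃ y, d' 0 y = x) ∧
          (∀ (n : ℕ) (x : P' (n + 1)), d' n x = 0 ↔ ∃ y, d' (n + 1) y = x) := by
        refine ⟨fun n => P (n+1), fun n => d (n+1),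
          (d 0).codRestrict K (fun y => (hex0 (d 0 y)).2 ⟨y, rfl⟩),
          fun n => hPproj (n+1), ?_, ?_, fun n x => hex (n+1) x⟩
        · rintro ⟨x, hx⟩
          obtain ⟨y, hy⟩ := (hex0 x).1 hx
          exact ⟨y, Subtype.ext hy⟩
        · intro x
          refine Iff.trans (show ((d 0).codRestrict K _ x = 0) ↔ d 0 x = 0 from
            ⟨fun h => congrArg Subtype.val h, fun h => Subtype.ext h⟩) ?_
          exact hex 0 x
      exact main_ind σ hσ_splits hσ_left hσ_right k K hresK hdimK

end Aux4

/-- Let `R` be a commutative ring and `A` an `R`-algebra such that the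
multiplication map `μ : A ⊗_R A → A` admits an `A`-bimodule right inverse `σ`.  Let `N` be a
left `A`-module and `k ≥ 0`.  If there is an exact complex `⋯ → P_1 → P_0 → N → 0` of left
`A`-modules in which every `P_n` is projective as an `R`-module (by restriction of scalars),
and if the projective dimension of `N` as an `R`-module is at most `k`, then the projective
dimension of `N` as a left `A`-module is at most `k`. -/
theorem projDim_le_of_relatively_homologically_trivial
    (R : Type) [CommRing R] (A : Type) [Ring A] [Algebra R A]
    (σ : A →ₗ[R] A ⊗[R] A)
    (hσ_splits : ∀ x : A, LinearMap.mul' R A (σ x) = x)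
    (hσ_left : ∀ a x : A, σ (a * x) = LinearMap.rTensor A (LinearMap.mulLeft R a) (σ x))
    (hσ_right : ∀ a x : A, σ (x * a) = LinearMap.lTensor A (LinearMap.mulRight R a) (σ x))
    (N : Type) [AddCommGroup N] [Module R N] [Module A N] [IsScalarTower R A N] (k : ℕ)
    (hres : ∃ (P : ℕ → ModuleCat.{0} A) (d : ∀ n : ℕ, (P (n + 1) : Type) →ₗ[A] (P n : Type))
        (π : (P 0 : Type) →ₗ[A] N),
        (∀ n, @Module.Projective R _ (P n) _ (Module.compHom (P n) (algebraMap R A))) ∧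
        Function.Surjective π ∧
        (∀ x : P 0, π x = 0 ↔ ∃ y, d 0 y = x) ∧
        (∀ (n : ℕ) (x : P (n + 1)), d n x = 0 ↔ ∃ y, d (n + 1) y = x))
    (hdim : ProjDimLE R N k) :
    ProjDimLE A N k := by
  obtain ⟨P, d, π, hP, hπs, hex0, hex⟩ := hres
  have h1 : PdRec R k N := chain_to_pdRec k N hdim
  have h2 : PdRec A k N := main_ind σ hσ_splits hσ_left hσ_right k N
    ⟨P, d, π, hP, hπs, hex0, hex⟩ h1
  exact pdRec_to_chain k N h2
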